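/- Every block of the Thue–Morse sequence occurs infinitely many times: for all i, n, N : ℕ there exists p > N such that t (p + j) = t (i + j) for all j < n. -/

import Mathlib

/-- The Thue–Morse sequence: `t n = true` iff the number of 1s in the
binary expansion of `n` is odd. -/
def thueMorse (n : ℕ) : Bool := (Nat.digits 2 n).count 1 % 2 == 1

lemma tm_two_mul (n : ℕ) : thueMorse (2 * n) = thueMorse n := by
  rcases Nat.eq_zero_or_pos n with h | h
  · simp [h]
  · unfold thueMorse
    rw [Nat.digits_def' (by norm_num) (by omega)]
    simp [Nat.mul_div_cancel_left _ (by norm_num : 0 < 2), Nat.mul_mod_right]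

lemma tm_two_mul_add_one (n : ℕ) : thueMorse (2 * n + 1) = !thueMorse n := by
  unfold thueMorse
  rw [Nat.digits_def' (by norm_num) (by omega)]
  have h1 : (2 * n + 1) % 2 = 1 := by omega
  have h2 : (2 * n + 1) / 2 = n := by omega
  rw [h1, h2]
  simp only [List.count_cons, if_pos rfl]
  rcases Nat.mod_two_eq_zero_or_one ((Nat.digits 2 n).count 1) with h | h <;>
    simp [Nat.add_mod, h]

lemma tm_pow_mul_add (k : ℕ) : ∀ a r : ℕ, r < 2 ^ k →
    thueMorse (2 ^ k * a + r) = xor (thueMorse a) (thueMorse r) := by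
  induction k with
  | zero =>
    intro a r hr
    interval_cases r
    simp [thueMorse]
  | succ k ih =>
    intro a r hr
    rcases Nat.even_or_odd r with ⟨r', hr'⟩ | ⟨r', hr'⟩
    · have : 2 ^ (k + 1) * a + r = 2 * (2 ^ k * a + r') := by
        rw [hr']; ring
      rw [this, tm_two_mul, ih a r' (by omega), hr']
      rw [show r' + r' = 2 * r' by ring, tm_two_mul]
    · have : 2 ^ (k + 1) * a + r = 2 * (2 ^ k * a + r') + 1 := by
        rw [hr']; ring
      rw [this, tm_two_mul_add_one, ih a r' (by omega), hr', tm_two_mul_add_one]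
      cases thueMorse a <;> cases thueMorse r' <;> rfl

/-- Every block of the Thue–Morse sequence occurs infinitely many times. -/
theorem thueMorse_block_recurs (i n N : ℕ) :
    ∃ p > N, ∀ j < n, thueMorse (p + j) = thueMorse (i + j) := by
  obtain ⟨k, hk⟩ : ∃ k, N + i + n < 2 ^ k := ⟨N + i + n, Nat.lt_two_pow_self⟩
  refine ⟨2 ^ k * 3 + i, by nlinarith [Nat.one_le_two_pow (n := k)], fun j hj => ?_⟩
  have h0 : thueMorse 0 = false := by simp [thueMorse]
  have h1 : thueMorse 1 = true := by
    rw [show (1:ℕ) = 2*0+1 from rfl, tm_two_mul_add_one, h0]; rfl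
  have h3 : thueMorse 3 = false := by
    rw [show (3:ℕ) = 2*1+1 from rfl, tm_two_mul_add_one, h1]; rfl
  have := tm_pow_mul_add k 3 (i + j) (by omega)
  rw [show 2 ^ k * 3 + i + j = 2 ^ k * 3 + (i + j) by ring, this, h3]
  simp
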